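/- Let T be a perfect Roman domination stable tree of order n ≥ 3 with diameter at least 4 such that T contains no pendant path P_3, and let P = x_1x_2⋯x_k be a longest path of T with d(x_2) = 2. Then d(x_3) = 2. -/

import Mathlib

open SimpleGraph

/-- A perfect Roman dominating function: values in {0,1,2}, and every vertex with
value 0 has exactly one neighbor with value 2. -/
def IsPRDF {V : Type*} (G : SimpleGraph V) (f : V → ℕ) : Prop :=
  (∀ v, f v ≤ 2) ∧ ∀ u, f u = 0 → ∃! v, G.Adj u v ∧ f v = 2

/-- The perfect Roman domination number: minimum weight of a PRDF. -/
noncomputable def prdn {V : Type*} [Fintype V] (G : SimpleGraph V) : ℕ :=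
  sInf {w | ∃ f : V → ℕ, IsPRDF G f ∧ ∑ v, f v = w}

/-- A graph is perfect Roman domination stable if removing any vertex
leaves the perfect Roman domination number unchanged. -/
noncomputable def Stable {V : Type*} [Fintype V] [DecidableEq V] (G : SimpleGraph V) : Prop :=
  ∀ v : V, prdn (G.induce {u | u ≠ v}) = prdn G

/-- The set of vertices receiving 0 under every minimum-weight PRDF. -/
def Wset {V : Type*} [Fintype V] (G : SimpleGraph V) : Set V :=
  {u | ∀ f : V → ℕ, IsPRDF G f → (∑ v, f v) = prdn G → f u = 0}

/-- Degree of a vertex. -/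
noncomputable def deg {V : Type*} (G : SimpleGraph V) (v : V) : ℕ := (G.neighborSet v).ncard

section Helpers

variable {V : Type*}

lemma getVert_ne' {G : SimpleGraph V} : ∀ {x y : V} (p : G.Walk x y), p.IsPath →
    ∀ i j, i < j → j ≤ p.length → p.getVert i ≠ p.getVert j := by
  intro x y p
  induction p with
  | nil => intro _ i j hij hj; simp at hj; omega
  | @cons a b c h q ih =>
    intro hp i j hij hj
    have hq := (Walk.cons_isPath_iff h q).mp hp
    have hjl : j - 1 ≤ q.length := by simp [Walk.length_cons] at hj; omega
    match i, j with
    | 0, j+1 =>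
      simp only [Walk.getVert_zero, Walk.getVert_cons_succ]
      intro he
      exact hq.2 (he ▸ Walk.mem_support_iff_exists_getVert.mpr ⟨j, rfl, by omega⟩)
    | i+1, j+1 =>
      simp only [Walk.getVert_cons_succ]
      exact ih hq.1 i j (by omega) (by omega)

lemma prdn_le_erase [Fintype V] [DecidableEq V] (T : SimpleGraph V) (hstab : Stable T)
    (v : V) (g : V → ℕ) (hb : ∀ u, g u ≤ 2)
    (hc : ∀ u, u ≠ v → g u = 0 → ∃! t, t ≠ v ∧ T.Adj u t ∧ g t = 2) :
    prdn T ≤ ∑ u ∈ Finset.univ.erase v, g u := by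
  rw [← hstab v]
  apply Nat.sInf_le
  refine ⟨fun u => g u.1, ⟨fun u => hb u.1, ?_⟩, ?_⟩
  · rintro ⟨u, hu⟩ h0
    obtain ⟨t, ⟨htv, hadj, ht2⟩, huniq⟩ := hc u hu h0
    refine ⟨⟨t, htv⟩, ⟨hadj, ht2⟩, ?_⟩
    rintro ⟨t', ht'v⟩ ⟨hadj', ht'2⟩
    exact Subtype.ext (huniq t' ⟨ht'v, hadj', ht'2⟩)
  · exact (Finset.sum_subtype _ (by simp) _).symm

lemma prdn_mem [Fintype V] (T : SimpleGraph V) :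
    ∃ f : V → ℕ, IsPRDF T f ∧ ∑ v, f v = prdn T := by
  have hne : (∑ _v : V, 1) ∈ {w | ∃ f : V → ℕ, IsPRDF T f ∧ ∑ v, f v = w} :=
    ⟨fun _ => 1, ⟨fun _ => one_le_two, fun u h0 => absurd h0 one_ne_zero⟩, rfl⟩
  exact Nat.sInf_mem ⟨_, hne⟩

end Helpers

/-- in a stable tree of order ≥ 3, diameter ≥ 4, with no pendant path
P₃, if the second vertex of a longest path has degree 2 then so does the third. -/
theorem stmt9 {V : Type*} [Fintype V] [DecidableEq V] (T : SimpleGraph V)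
    (hT : T.IsTree) (hstab : Stable T) (hn : 3 ≤ Fintype.card V)
    (hdiam : ∃ u w : V, 4 ≤ T.dist u w)
    (hnoP3 : ¬ ∃ v1 v2 v3 : V, T.Adj v1 v2 ∧ T.Adj v2 v3 ∧
      deg T v1 = 1 ∧ deg T v2 = 2 ∧ deg T v3 = 2)
    (x y : V) (p : T.Walk x y) (hp : p.IsPath)
    (hlong : ∀ (a b : V) (q : T.Walk a b), q.IsPath → q.length ≤ p.length)
    (hx2 : deg T (p.getVert 1) = 2) :
    deg T (p.getVert 2) = 2 := by
  by_contra h3ne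
  set x2 := p.getVert 1 with hx2def
  set x3 := p.getVert 2 with hx3def
  set x4 := p.getVert 3 with hx4def
  have hx0 : p.getVert 0 = x := p.getVert_zero
  -- p has length at least 4
  obtain ⟨u0, w0, hd⟩ := hdiam
  obtain ⟨q0⟩ := hT.isConnected.preconnected u0 w0
  have hL : 4 ≤ p.length :=
    le_trans (le_trans hd (SimpleGraph.dist_le q0.bypass)) (hlong _ _ _ q0.bypass_isPath)
  -- adjacency along p
  have a12 : T.Adj x x2 := by
    have := p.adj_getVert_succ (i := 0) (by omega); rwa [hx0] at this
  have a23 : T.Adj x2 x3 := p.adj_getVert_succ (by omega)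
  have a34 : T.Adj x3 x4 := p.adj_getVert_succ (by omega)
  -- distinctness
  have hne02 : x ≠ x3 := by
    have := getVert_ne' p hp 0 2 (by omega) (by omega); rwa [hx0] at this
  have hne13 : x2 ≠ x4 := getVert_ne' p hp 1 3 (by omega) (by omega)
  -- x is a leaf: its only neighbor is x2
  have leafx : ∀ z, T.Adj x z → z = x2 := by
    intro z hz
    by_cases hzs : z ∈ p.support
    · have hE : (Walk.cons hz Walk.nil).IsPath := by
        simp [Walk.cons_isPath_iff, hz.ne]
      have hq := hp.takeUntil hzs
      have heq : p.takeUntil z hzs = Walk.cons hz Walk.nil :=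
        (hT.existsUnique_path x z).unique hq hE
      have hthis := Walk.getVert_append (p.takeUntil z hzs) (p.dropUntil z hzs) 1
      rw [p.take_spec hzs] at hthis
      rw [heq] at hthis
      simp at hthis
      exact hthis.symm
    · have hcons := hp.cons (h := hz.symm) hzs
      have := hlong _ _ _ hcons
      simp [Walk.length_cons] at this
  -- neighbors of x2 are exactly x and x3
  have hx2' : (T.neighborSet x2).ncard = 2 := hx2
  obtain ⟨a, b, hab, hset⟩ := Set.ncard_eq_two.mp hx2'
  have nbr2 : ∀ z, T.Adj x2 z → z = x ∨ z = x3 := by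
    have hxm : x ∈ ({a, b} : Set V) := hset ▸ a12.symm
    have hx3m : x3 ∈ ({a, b} : Set V) := hset ▸ a23
    intro z hz
    have hzm : z ∈ ({a, b} : Set V) := hset ▸ hz
    simp only [Set.mem_insert_iff, Set.mem_singleton_iff] at hxm hx3m hzm
    have hxx3 : x ≠ x3 := hne02
    rcases hxm with rfl | rfl <;> rcases hx3m with h3 | h3 <;>
      rcases hzm with rfl | rfl <;> tauto
  -- x3 has a neighbor besides x2 and x4
  have hw : ∃ w, T.Adj x3 w ∧ w ≠ x2 ∧ w ≠ x4 := by
    by_contra hcon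
    push_neg at hcon
    have hsub2 : T.neighborSet x3 ⊆ {x2, x4} := by
      intro z hz
      rcases eq_or_ne z x2 with rfl | hzx2
      · exact Set.mem_insert _ _
      · exact Set.mem_insert_iff.mpr (Or.inr (hcon z hz hzx2))
    have hle2 := Set.ncard_le_ncard hsub2 (Set.toFinite _)
    have hsub : ({x2, x4} : Set V) ⊆ T.neighborSet x3 := by
      intro z hz
      rcases hz with rfl | hz
      · exact a23.symm
      · rw [Set.mem_singleton_iff] at hz; subst hz; exact a34
    have hge2 := Set.ncard_le_ncard hsub (Set.toFinite _)
    rw [Set.ncard_pair hne13] at hle2 hge2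
    exact h3ne (le_antisymm hle2 hge2)
  -- a minimum PRDF
  obtain ⟨f, hf, hsum⟩ := prdn_mem T
  -- no vertex gets value 1
  have no1 : ∀ v, f v ≠ 1 := by
    intro v h1
    have hc : ∀ u, u ≠ v → f u = 0 → ∃! t, t ≠ v ∧ T.Adj u t ∧ f t = 2 := by
      intro u _ h0
      obtain ⟨t, ⟨hadj, ht2⟩, huni⟩ := hf.2 u h0
      refine ⟨t, ⟨fun h => by rw [h, h1] at ht2; omega, hadj, ht2⟩, ?_⟩
      rintro t' ⟨_, hadj', ht'2⟩
      exact huni t' ⟨hadj', ht'2⟩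
    have hle := prdn_le_erase T hstab v f hf.1 hc
    have he := Finset.sum_erase_add Finset.univ f (Finset.mem_univ v)
    omega
  have hb2 : ∀ v, f v = 0 ∨ f v = 2 := by
    intro v; have := hf.1 v; have := no1 v; omega
  -- analyze f x
  rcases hb2 x with hfx | hfx
  · -- f x = 0, hence f x2 = 2
    have hfx2 : f x2 = 2 := by
      obtain ⟨t, ⟨hadj, ht2⟩, _⟩ := hf.2 x hfx
      rwa [leafx t hadj] at ht2
    rcases hb2 x3 with hfx3 | hfx3
    · -- Case B : f x = 0, f x2 = 2, f x3 = 0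
      obtain ⟨t3, ⟨hadj3, ht32⟩, huni3⟩ := hf.2 x3 hfx3
      have ht3 : t3 = x2 := (huni3 x2 ⟨a23.symm, hfx2⟩).symm
      subst ht3
      obtain ⟨w, haw, hwx2, hwx4⟩ := hw
      have hfw0 : f w = 0 := by
        rcases hb2 w with h | h
        · exact h
        · exact absurd (huni3 w ⟨haw, h⟩) hwx2
      obtain ⟨u, ⟨hadjwu, hu2⟩, huniw⟩ := hf.2 w hfw0
      have hux3 : u ≠ x3 := by rintro rfl; rw [hfx3] at hu2; omega
      -- the setup for the longest-path argument
      have h3s : x3 ∈ p.support :=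
        Walk.mem_support_iff_exists_getVert.mpr ⟨2, rfl, by omega⟩
      set s3 := p.dropUntil x3 h3s with hs3def
      have hs3p : s3.IsPath := hp.dropUntil h3s
      have lenQ : (p.takeUntil x3 h3s).length = 2 := by
        have hQ : (Walk.cons a12 (Walk.cons a23 Walk.nil)).IsPath := by
          simp [Walk.cons_isPath_iff, a23.ne, hne02, a12.ne]
        have heq : p.takeUntil x3 h3s = Walk.cons a12 (Walk.cons a23 Walk.nil) :=
          (hT.existsUnique_path x x3).unique (hp.takeUntil h3s) hQ
        rw [heq]; simp
      have lens3 : 2 + s3.length = p.length := by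
        have := congrArg Walk.length (p.take_spec h3s)
        rw [Walk.length_append, lenQ] at this
        exact this
      have s3gv1 : s3.getVert 1 = x4 := by
        have hthis := Walk.getVert_append (p.takeUntil x3 h3s) (p.dropUntil x3 h3s) 3
        rw [p.take_spec h3s, lenQ] at hthis
        simp at hthis
        rw [hx4def]
        exact hthis.symm
      have wns : w ∉ s3.support := by
        intro hws
        have hE : (Walk.cons haw Walk.nil).IsPath := by
          simp [Walk.cons_isPath_iff, haw.ne]
        have heq : s3.takeUntil w hws = Walk.cons haw Walk.nil :=
          (hT.existsUnique_path x3 w).unique (hs3p.takeUntil hws) hE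
        have hthis := Walk.getVert_append (s3.takeUntil w hws) (s3.dropUntil w hws) 1
        rw [s3.take_spec hws, heq] at hthis
        simp at hthis
        rw [s3gv1] at hthis
        exact hwx4 hthis.symm
      have uns : u ∉ s3.support := by
        intro hus
        have hR : (Walk.cons haw.symm (s3.takeUntil u hus)).IsPath := by
          rw [Walk.cons_isPath_iff]
          exact ⟨hs3p.takeUntil hus, fun hmem => wns (Walk.support_takeUntil_subset _ _ hmem)⟩
        have hE : (Walk.cons hadjwu Walk.nil).IsPath := by
          simp [Walk.cons_isPath_iff, hadjwu.ne]
        have heq := (hT.existsUnique_path w u).unique hE hR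
        have hlen := congrArg Walk.length heq
        simp [Walk.length_cons] at hlen
        exact hux3 hlen.symm
      -- u is a leaf of T
      have leafu : ∀ z, T.Adj u z → z = w := by
        intro z hz
        by_contra hzw
        have zns : z ∉ s3.support := by
          intro hzs
          have hR : (Walk.cons hadjwu.symm (Walk.cons haw.symm (s3.takeUntil z hzs))).IsPath := by
            rw [Walk.cons_isPath_iff, Walk.cons_isPath_iff]
            refine ⟨⟨hs3p.takeUntil hzs,
              fun hmem => wns (Walk.support_takeUntil_subset _ _ hmem)⟩, ?_⟩
            simp only [Walk.support_cons, List.mem_cons]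
            push_neg
            exact ⟨hadjwu.ne.symm, fun hmem => uns (Walk.support_takeUntil_subset _ _ hmem)⟩
          have hE : (Walk.cons hz Walk.nil).IsPath := by
            simp [Walk.cons_isPath_iff, hz.ne]
          have heq := (hT.existsUnique_path u z).unique hE hR
          have hlen := congrArg Walk.length heq
          simp [Walk.length_cons] at hlen
        -- build a longer path
        have hW : (s3.reverse.append
            (Walk.cons haw (Walk.cons hadjwu (Walk.cons hz Walk.nil)))).IsPath := by
          rw [Walk.isPath_def, Walk.support_append, List.nodup_append]
          refine ⟨?_, ?_, ?_⟩
          · rw [Walk.support_reverse]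
            exact List.nodup_reverse.mpr hs3p.support_nodup
          · have hwz : w ≠ z := fun h => hzw h.symm
            simp [Walk.support_cons, hadjwu.ne, hz.ne, hwz]
          · intro a ha b hb hab
            subst hab
            rw [Walk.support_reverse, List.mem_reverse] at ha
            simp only [Walk.support_cons, Walk.support_nil, List.tail_cons, List.mem_cons,
              List.not_mem_nil, or_false] at hb
            rcases hb with rfl | rfl | rfl
            · exact wns ha
            · exact uns ha
            · exact zns ha
        have hlen := hlong _ _ _ hW
        rw [Walk.length_append, Walk.length_reverse] at hlen
        simp [Walk.length_cons] at hlen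
        omega
      -- remove u after lowering w to 1
      have hgw : Function.update f w 1 w = 1 := Function.update_self _ _ _
      have hgo : ∀ z, z ≠ w → Function.update f w 1 z = f z :=
        fun z hzw => Function.update_of_ne hzw _ _
      have hc : ∀ u', u' ≠ u → Function.update f w 1 u' = 0 →
          ∃! t, t ≠ u ∧ T.Adj u' t ∧ Function.update f w 1 t = 2 := by
        intro u' hu'u h0
        have hu'w : u' ≠ w := by rintro rfl; rw [hgw] at h0; omega
        rw [hgo u' hu'w] at h0
        obtain ⟨t, ⟨hadj, ht2⟩, huni⟩ := hf.2 u' h0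
        have htu : t ≠ u := by rintro rfl; exact hu'w (leafu u' hadj.symm)
        have htw : t ≠ w := by rintro rfl; rw [hfw0] at ht2; omega
        refine ⟨t, ⟨htu, hadj, by rw [hgo t htw]; exact ht2⟩, ?_⟩
        rintro t' ⟨_, hadj', ht'2⟩
        have ht'w : t' ≠ w := by rintro rfl; rw [hgw] at ht'2; omega
        exact huni t' ⟨hadj', by rwa [hgo t' ht'w] at ht'2⟩
      have hble : ∀ z, Function.update f w 1 z ≤ 2 := by
        intro z
        rcases eq_or_ne z w with rfl | hzw
        · rw [hgw]; omega
        · rw [hgo z hzw]; exact hf.1 z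
      have hle := prdn_le_erase T hstab u (Function.update f w 1) hble hc
      have e1 := Finset.sum_erase_add Finset.univ (Function.update f w 1) (Finset.mem_univ u)
      have huw : u ≠ w := by rintro rfl; rw [hfw0] at hu2; omega
      have hgu : Function.update f w 1 u = 2 := by rw [hgo u huw]; exact hu2
      have e2 : ∑ v, Function.update f w 1 v = 1 + ∑ v ∈ Finset.univ.erase w, f v := by
        rw [Finset.erase_eq]; exact Finset.sum_update_of_mem (Finset.mem_univ w) _ _
      have e3 := Finset.sum_erase_add Finset.univ f (Finset.mem_univ w)
      omega
    · -- f x = 0, f x2 = 2, f x3 = 2 : improve f on T itself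
      have hgx : Function.update (Function.update f x 1) x2 0 x = 1 := by
        rw [Function.update_of_ne a12.ne, Function.update_self]
      have hgx2 : Function.update (Function.update f x 1) x2 0 x2 = 0 :=
        Function.update_self _ _ _
      have hgo : ∀ z, z ≠ x → z ≠ x2 → Function.update (Function.update f x 1) x2 0 z = f z :=
        fun z hzx hzx2 => by
          rw [Function.update_of_ne hzx2, Function.update_of_ne hzx]
      have hPRDF : IsPRDF T (Function.update (Function.update f x 1) x2 0) := by
        constructor
        · intro z
          rcases eq_or_ne z x2 with rfl | hzx2
          · rw [hgx2]; omega
          rcases eq_or_ne z x with rfl | hzx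
          · rw [hgx]; omega
          · rw [hgo z hzx hzx2]; exact hf.1 z
        · intro u h0
          rcases eq_or_ne u x2 with rfl | hux2
          · refine ⟨x3, ⟨a23, by rw [hgo x3 hne02.symm a23.ne']; exact hfx3⟩, ?_⟩
            rintro t' ⟨hadj', ht'2⟩
            rcases nbr2 t' hadj' with rfl | rfl
            · rw [hgx] at ht'2; omega
            · rfl
          rcases eq_or_ne u x with rfl | hux
          · rw [hgx] at h0; omega
          · rw [hgo u hux hux2] at h0
            obtain ⟨t, ⟨hadj, ht2⟩, huni⟩ := hf.2 u h0
            have htx : t ≠ x := by rintro rfl; rw [hfx] at ht2; omega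
            have htx2 : t ≠ x2 := by
              rintro rfl
              rcases nbr2 u hadj.symm with rfl | rfl
              · exact hux rfl
              · rw [hfx3] at h0; omega
            refine ⟨t, ⟨hadj, by rw [hgo t htx htx2]; exact ht2⟩, ?_⟩
            rintro t' ⟨hadj', ht'2⟩
            have ht'x : t' ≠ x := by rintro rfl; rw [hgx] at ht'2; omega
            have ht'x2 : t' ≠ x2 := by rintro rfl; rw [hgx2] at ht'2; omega
            exact huni t' ⟨hadj', by rwa [hgo t' ht'x ht'x2] at ht'2⟩
      have hlt : prdn T ≤ ∑ v, Function.update (Function.update f x 1) x2 0 v :=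
        Nat.sInf_le ⟨_, hPRDF, rfl⟩
      have s1 : ∑ v, Function.update (Function.update f x 1) x2 0 v =
          0 + ∑ v ∈ Finset.univ.erase x2, Function.update f x 1 v := by
        rw [Finset.erase_eq]; exact Finset.sum_update_of_mem (Finset.mem_univ x2) _ _
      have s2 := Finset.sum_erase_add Finset.univ (Function.update f x 1) (Finset.mem_univ x2)
      have f1x2 : Function.update f x 1 x2 = 2 := by
        rw [Function.update_of_ne a12.ne']; exact hfx2
      have s3' : ∑ v, Function.update f x 1 v = 1 + ∑ v ∈ Finset.univ.erase x, f v := by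
        rw [Finset.erase_eq]; exact Finset.sum_update_of_mem (Finset.mem_univ x) _ _
      have s4 := Finset.sum_erase_add Finset.univ f (Finset.mem_univ x)
      omega
  · -- f x = 2
    rcases hb2 x2 with hfx2 | hfx2
    · -- f x = 2, f x2 = 0 : remove x after lowering x2 to 1
      have hgx2 : Function.update f x2 1 x2 = 1 := Function.update_self _ _ _
      have hgo : ∀ z, z ≠ x2 → Function.update f x2 1 z = f z :=
        fun z hz => Function.update_of_ne hz _ _
      have hc : ∀ u, u ≠ x → Function.update f x2 1 u = 0 →
          ∃! t, t ≠ x ∧ T.Adj u t ∧ Function.update f x2 1 t = 2 := by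
        intro u hux h0
        have hux2 : u ≠ x2 := by rintro rfl; rw [hgx2] at h0; omega
        rw [hgo u hux2] at h0
        obtain ⟨t, ⟨hadj, ht2⟩, huni⟩ := hf.2 u h0
        have htx : t ≠ x := by rintro rfl; exact hux2 (leafx u hadj.symm)
        have htx2 : t ≠ x2 := by rintro rfl; rw [hfx2] at ht2; omega
        refine ⟨t, ⟨htx, hadj, by rw [hgo t htx2]; exact ht2⟩, ?_⟩
        rintro t' ⟨_, hadj', ht'2⟩
        have ht'x2 : t' ≠ x2 := by rintro rfl; rw [hgx2] at ht'2; omega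
        exact huni t' ⟨hadj', by rwa [hgo t' ht'x2] at ht'2⟩
      have hble : ∀ z, Function.update f x2 1 z ≤ 2 := by
        intro z
        rcases eq_or_ne z x2 with rfl | hz
        · rw [hgx2]; omega
        · rw [hgo z hz]; exact hf.1 z
      have hle := prdn_le_erase T hstab x (Function.update f x2 1) hble hc
      have e1 := Finset.sum_erase_add Finset.univ (Function.update f x2 1) (Finset.mem_univ x)
      have hgxval : Function.update f x2 1 x = 2 := by rw [hgo x a12.ne]; exact hfx
      have e2 : ∑ v, Function.update f x2 1 v = 1 + ∑ v ∈ Finset.univ.erase x2, f v := by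
        rw [Finset.erase_eq]; exact Finset.sum_update_of_mem (Finset.mem_univ x2) _ _
      have e3 := Finset.sum_erase_add Finset.univ f (Finset.mem_univ x2)
      omega
    · -- f x = 2, f x2 = 2 : just remove x
      have hc : ∀ u, u ≠ x → f u = 0 → ∃! t, t ≠ x ∧ T.Adj u t ∧ f t = 2 := by
        intro u _ h0
        obtain ⟨t, ⟨hadj, ht2⟩, huni⟩ := hf.2 u h0
        have htx : t ≠ x := by
          rintro rfl
          rw [leafx u hadj.symm, hfx2] at h0; omega
        refine ⟨t, ⟨htx, hadj, ht2⟩, ?_⟩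
        rintro t' ⟨_, hadj', ht'2⟩
        exact huni t' ⟨hadj', ht'2⟩
      have hle := prdn_le_erase T hstab x f hf.1 hc
      have he := Finset.sum_erase_add Finset.univ f (Finset.mem_univ x)
      omega
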